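/- Let L₁ = ℂ(α₁,…,α_{2g+1}) be a rational function field in 2g+1 independent indeterminates over ℂ. The field extension of L₁ obtained by adjoining the square roots √(αᵢ − αⱼ) for all 1 ≤ i < j ≤ 2g+1 has degree 2^(2g²+g) over L₁, with Galois group isomorphic to (ℤ/2ℤ)^(2g²+g). -/

import Mathlib

set_option synthInstance.maxHeartbeats 400000

/-- The rational function field `ℂ(α₁, …, αₙ)`. -/
noncomputable abbrev RatFunField (n : ℕ) : Type := FractionRing (MvPolynomial (Fin n) ℂ)


set_option maxHeartbeats 1000000



section Quad
variable {K M : Type*} [Field K] [Field M] [Algebra K M]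

lemma quad_repr {b : K} {t : M} (ht : t ^ 2 = algebraMap K M b)
    (htop : Algebra.adjoin K ({t} : Set M) = ⊤) (z : M) :
    ∃ x y : K, z = algebraMap K M x + algebraMap K M y * t := by
  have hz : z ∈ Algebra.adjoin K ({t} : Set M) := htop ▸ trivial
  induction hz using Algebra.adjoin_induction with
  | mem x hx =>
      exact ⟨0, 1, by simp [Set.mem_singleton_iff.mp hx]⟩
  | algebraMap r => exact ⟨r, 0, by simp⟩
  | add x y hx hy ihx ihy =>
      obtain ⟨x1, y1, rfl⟩ := ihx; obtain ⟨x2, y2, rfl⟩ := ihy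
      exact ⟨x1 + x2, y1 + y2, by simp only [map_add]; ring⟩
  | mul x y hx hy ihx ihy =>
      obtain ⟨x1, y1, rfl⟩ := ihx; obtain ⟨x2, y2, rfl⟩ := ihy
      refine ⟨x1 * x2 + y1 * y2 * b, x1 * y2 + y1 * x2, ?_⟩
      simp only [map_add, map_mul]
      linear_combination (algebraMap K M y1 * algebraMap K M y2) * ht

lemma quad_unique {b : K} (hb : ¬ IsSquare b) {t : M} (ht : t ^ 2 = algebraMap K M b)
    {x y : K} (h : algebraMap K M x + algebraMap K M y * t = 0) : x = 0 ∧ y = 0 := by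
  have hinj : Function.Injective (algebraMap K M) := (algebraMap K M).injective
  by_cases hy : y = 0
  · subst hy
    simp only [map_zero, zero_mul, add_zero] at h
    exact ⟨hinj (by simpa using h), rfl⟩
  · exfalso
    apply hb
    have hyM : algebraMap K M y ≠ 0 := fun hc => hy (hinj (by simpa using hc))
    have htt : t = algebraMap K M (-(x / y)) := by
      rw [map_neg, map_div₀]
      field_simp
      linear_combination h
    refine ⟨-(x / y), hinj ?_⟩
    rw [← ht, htt, map_mul, ← sq]

lemma quad_main {b : K} (h2 : (2 : K) ≠ 0) (hb : ¬ IsSquare b) {t : M}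
    (ht : t ^ 2 = algebraMap K M b) (htop : Algebra.adjoin K ({t} : Set M) = ⊤) :
    FiniteDimensional K M ∧ Module.finrank K M = 2 ∧
      ∀ a : K, IsSquare (algebraMap K M a) → IsSquare a ∨ IsSquare (a * b) := by
  have hinj : Function.Injective (algebraMap K M) := (algebraMap K M).injective
  have hli : LinearIndependent K ![(1 : M), t] := by
    rw [LinearIndependent.pair_iff]
    intro u v huv
    have : algebraMap K M u + algebraMap K M v * t = 0 := by
      rw [← huv]; simp [Algebra.smul_def]
    exact quad_unique hb ht this
  have hspan : Submodule.span K (Set.range ![(1 : M), t]) = ⊤ := by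
    rw [eq_top_iff]
    intro z _
    obtain ⟨x, y, rfl⟩ := quad_repr ht htop z
    have h1 : (1 : M) ∈ Set.range ![(1 : M), t] := ⟨0, rfl⟩
    have h2' : t ∈ Set.range ![(1 : M), t] := ⟨1, rfl⟩
    have : algebraMap K M x + algebraMap K M y * t
        = x • (1 : M) + y • t := by simp [Algebra.smul_def]
    rw [this]
    exact Submodule.add_mem _
      (Submodule.smul_mem _ _ (Submodule.subset_span h1))
      (Submodule.smul_mem _ _ (Submodule.subset_span h2'))
  let B : Module.Basis (Fin 2) K M := Module.Basis.mk hli (le_of_eq hspan.symm)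
  have hfd : FiniteDimensional K M := Module.Finite.of_basis B
  refine ⟨hfd, ?_, ?_⟩
  · rw [Module.finrank_eq_card_basis B, Fintype.card_fin]
  · intro a ⟨r, hr⟩
    obtain ⟨x, y, rfl⟩ := quad_repr ht htop r
    have hmain : algebraMap K M (x ^ 2 + y ^ 2 * b - a) + algebraMap K M (2 * x * y) * t = 0 := by
      simp only [map_add, map_sub, map_mul, map_pow, map_ofNat]
      linear_combination (-(algebraMap K M y * algebraMap K M y)) * ht - hr
    obtain ⟨h1, h2'⟩ := quad_unique hb ht hmain
    have h1' : a = x ^ 2 + y ^ 2 * b := by linear_combination -h1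
    rcases mul_eq_zero.mp (by
        have : (2 : K) * (x * y) = 0 := by linear_combination h2'
        exact this) with hx | hx
    · exact absurd hx h2
    rcases mul_eq_zero.mp hx with hx0 | hy0
    · right
      exact ⟨y * b, by rw [h1', hx0]; ring⟩
    · left
      exact ⟨x, by rw [h1', hy0]; ring⟩
end Quad

open IntermediateField in
theorem multi_quad (n : ℕ) :
    ∀ (K M : Type u) [Field K] [Field M] [Algebra K M],
    (2 : K) ≠ 0 → ∀ (d : Fin n → K) (s : Fin n → M),
    (∀ i, s i ^ 2 = algebraMap K M (d i)) →
    Algebra.adjoin K (Set.range s) = ⊤ →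
    (∀ S : Finset (Fin n), IsSquare (∏ i ∈ S, d i) → S = ∅) →
    FiniteDimensional K M ∧ Module.finrank K M = 2 ^ n := by
  induction n with
  | zero =>
      intro K M _ _ _ h2 d s hs htop hind
      have hrange : Set.range s = ∅ := Set.range_eq_empty s
      rw [hrange, Algebra.adjoin_empty] at htop
      have hsurj : Function.Surjective (algebraMap K M) := by
        intro x
        have : x ∈ (⊥ : Subalgebra K M) := htop ▸ trivial
        exact Algebra.mem_bot.mp this
      let e : K ≃ₐ[K] M := AlgEquiv.ofBijective (Algebra.ofId K M)
        ⟨(algebraMap K M).injective, hsurj⟩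
      haveI : FiniteDimensional K M := Module.Finite.equiv e.toLinearEquiv
      refine ⟨inferInstance, ?_⟩
      rw [← e.toLinearEquiv.finrank_eq, Module.finrank_self, pow_zero]
  | succ n ih =>
      intro K M _ _ _ h2 d s hs htop hind
      have hd0 : ¬ IsSquare (d 0) := by
        intro h
        have := hind {0} (by simpa using h)
        simp at this
      have hint : IsIntegral K (s 0) := by
        refine ⟨Polynomial.X ^ 2 - Polynomial.C (d 0),
          Polynomial.monic_X_pow_sub_C (d 0) (by norm_num), ?_⟩
        simp [hs 0]
      set K' := K⟮s 0⟯ with hK'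
      set t' : K' := AdjoinSimple.gen K (s 0) with ht'def
      have hval : algebraMap K' M t' = s 0 := AdjoinSimple.algebraMap_gen K (s 0)
      have ht' : t' ^ 2 = algebraMap K K' (d 0) := by
        apply (algebraMap K' M).injective
        rw [map_pow, hval, hs 0, ← IsScalarTower.algebraMap_apply]
      have htop'' : Algebra.adjoin K ({t'} : Set K') = ⊤ := by
        apply Subalgebra.map_injective (f := K'.val) Subtype.val_injective
        rw [AlgHom.map_adjoin, Algebra.map_top, IntermediateField.range_val,
          Set.image_singleton]
        have : K'.val t' = s 0 := hval
        rw [this, ← adjoin_simple_toSubalgebra_of_isAlgebraic hint.isAlgebraic]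
      obtain ⟨hfd1, hrank1, hsq1⟩ := quad_main h2 hd0 ht' htop''
      set d' : Fin n → K' := fun i => algebraMap K K' (d i.succ) with hd'
      set s' : Fin n → M := fun i => s i.succ with hs'def
      have h2' : (2 : K') ≠ 0 := by
        intro h
        apply h2
        apply (algebraMap K K').injective
        rw [map_ofNat, map_zero]
        simpa using h
      have hs' : ∀ i, s' i ^ 2 = algebraMap K' M (d' i) := by
        intro i
        rw [hs'def, hd']
        simp only []
        rw [hs, IsScalarTower.algebraMap_apply K K' M]
      have htopM : Algebra.adjoin K' (Set.range s') = ⊤ := by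
        rw [eq_top_iff]
        intro z hz0
        clear hz0
        have hz : z ∈ Algebra.adjoin K (Set.range s) := htop ▸ trivial
        induction hz using Algebra.adjoin_induction with
        | mem x hx =>
            obtain ⟨i, rfl⟩ := hx
            rcases Fin.eq_zero_or_eq_succ i with rfl | ⟨j, rfl⟩
            · rw [← hval]
              exact Subalgebra.algebraMap_mem _ t'
            · exact Algebra.subset_adjoin ⟨j, rfl⟩
        | algebraMap r =>
            rw [IsScalarTower.algebraMap_apply K K' M]
            exact Subalgebra.algebraMap_mem _ _
        | add x y hx hy ihx ihy => exact add_mem ihx ihy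
        | mul x y hx hy ihx ihy => exact mul_mem ihx ihy
      have hind' : ∀ S : Finset (Fin n), IsSquare (∏ i ∈ S, d' i) → S = ∅ := by
        intro S hS
        have hprod : ∏ i ∈ S, d' i = algebraMap K K' (∏ i ∈ S, d i.succ) :=
          (map_prod _ _ _).symm
        rw [hprod] at hS
        rcases hsq1 _ hS with h | h
        · have := hind (S.map ⟨Fin.succ, Fin.succ_injective n⟩) (by rwa [Finset.prod_map])
          simpa [Finset.map_eq_empty] using this
        · exfalso
          have h0 : (0 : Fin (n+1)) ∉ S.map ⟨Fin.succ, Fin.succ_injective n⟩ := by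
            simp [Fin.succ_ne_zero]
          have := hind (insert 0 (S.map ⟨Fin.succ, Fin.succ_injective n⟩)) (by
            rw [Finset.prod_insert h0, Finset.prod_map]
            simpa [mul_comm] using h)
          exact absurd this (Finset.insert_ne_empty _ _)
      obtain ⟨hfd2, hrank2⟩ := ih K' M h2' d' s' hs' htopM hind'
      haveI := hfd1
      haveI := hfd2
      haveI : FiniteDimensional K M := FiniteDimensional.trans K K' M
      refine ⟨inferInstance, ?_⟩
      rw [← Module.finrank_mul_finrank K K' M, hrank1, hrank2]
      ring

open Polynomial in
theorem gal_iso {K M : Type*} [Field K] [Field M] [Algebra K M] [CharZero K]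
    {ι : Type*} [Fintype ι] [DecidableEq ι] (d : ι → K) (s : ι → M)
    (hs : ∀ i, s i ^ 2 = algebraMap K M (d i))
    (htop : Algebra.adjoin K (Set.range s) = ⊤)
    (hd0 : ∀ i, d i ≠ 0) [FiniteDimensional K M]
    (hrank : Module.finrank K M = 2 ^ Fintype.card ι) :
    Nonempty ((M ≃ₐ[K] M) ≃* Multiplicative (ι → ZMod 2)) := by
  classical
  haveI : CharZero M := charZero_of_injective_algebraMap (algebraMap K M).injective
  have hs0 : ∀ i, s i ≠ 0 := by
    intro i h
    apply hd0 i
    apply (algebraMap K M).injective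
    rw [← hs i, h, map_zero]
    ring
  have hsne : ∀ i, -s i ≠ s i := by
    intro i h
    have : (2 : M) * s i = 0 := by linear_combination -h
    rcases mul_eq_zero.mp this with h2 | h2
    · exact two_ne_zero h2
    · exact hs0 i h2
  -- M is a splitting field of F
  set F : K[X] := ∏ i : ι, (X ^ 2 - C (d i)) with hF
  have hFmonic : F.Monic := monic_prod_of_monic _ _ fun i _ =>
    monic_X_pow_sub_C (d i) two_ne_zero
  have hsplit : Splits (F.map (algebraMap K M)) := by
    rw [Polynomial.map_prod]
    refine Splits.prod fun i _ => ?_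
    have hmap : (X ^ 2 - C (d i)).map (algebraMap K M)
        = (X - C (s i)) * (X - C (-s i)) := by
      rw [Polynomial.map_sub, Polynomial.map_pow, map_X, map_C, ← hs i, map_neg, map_pow]
      ring
    rw [hmap]
    exact (Splits.X_sub_C _).mul (Splits.X_sub_C _)
  have hroot : Set.range s ⊆ F.rootSet M := by
    rintro _ ⟨i, rfl⟩
    rw [Polynomial.mem_rootSet]
    refine ⟨hFmonic.ne_zero, ?_⟩
    rw [hF, map_prod]
    refine Finset.prod_eq_zero (Finset.mem_univ i) ?_
    simp [hs i]
  have hadj : Algebra.adjoin K (F.rootSet M) = ⊤ :=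
    eq_top_iff.mpr (htop ▸ Algebra.adjoin_mono hroot)
  haveI : IsSplittingField K M F := ⟨hsplit, hadj⟩
  haveI : Normal K M := Normal.of_isSplittingField F
  haveI : IsGalois K M := ⟨⟩
  -- sign of σ on s i
  have hsign : ∀ (σ : M ≃ₐ[K] M) (i : ι), σ (s i) = s i ∨ σ (s i) = -s i := by
    intro σ i
    have h1 : (σ (s i)) ^ 2 = (s i) ^ 2 := by
      rw [← map_pow, hs i, AlgEquiv.commutes]
    have h2 : (σ (s i) - s i) * (σ (s i) + s i) = 0 := by linear_combination h1
    rcases mul_eq_zero.mp h2 with h | h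
    · exact Or.inl (sub_eq_zero.mp h)
    · exact Or.inr (eq_neg_of_add_eq_zero_left h)
  set ε : (M ≃ₐ[K] M) → ι → ZMod 2 := fun σ i => if σ (s i) = s i then 0 else 1 with hε
  have hεmul : ∀ σ τ i, ε (σ * τ) i = ε σ i + ε τ i := by
    intro σ τ i
    have hmul : (σ * τ) (s i) = σ (τ (s i)) := rfl
    rcases hsign τ i with hτ | hτ
    · have h1 : ε τ i = 0 := by simp [hε, hτ]
      have h2 : ε (σ * τ) i = ε σ i := by simp [hε, hmul, hτ]
      rw [h1, h2, add_zero]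
    · have h1 : ε τ i = 1 := by simp [hε, hτ, hsne i]
      rcases hsign σ i with hσ | hσ
      · have h2 : ε (σ * τ) i = 1 := by simp [hε, hmul, hτ, hσ, hsne i]
        have h3 : ε σ i = 0 := by simp [hε, hσ]
        rw [h1, h2, h3, zero_add]
      · have h2 : ε (σ * τ) i = 0 := by simp [hε, hmul, hτ, hσ]
        have h3 : ε σ i = 1 := by simp [hε, hσ, hsne i]
        rw [h1, h2, h3]
        decide
  set φ : (M ≃ₐ[K] M) →* Multiplicative (ι → ZMod 2) :=
    { toFun := fun σ => Multiplicative.ofAdd (ε σ)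
      map_one' := by
        have : ε 1 = 0 := by
          funext i
          simp [hε]
        show Multiplicative.ofAdd (ε 1) = 1
        rw [this, ofAdd_zero]
      map_mul' := fun σ τ => by
        have : ε (σ * τ) = ε σ + ε τ := by
          funext i
          rw [Pi.add_apply, hεmul]
        show Multiplicative.ofAdd (ε (σ * τ))
            = Multiplicative.ofAdd (ε σ) * Multiplicative.ofAdd (ε τ)
        rw [this, ofAdd_add] } with hφ
  have hinj : Function.Injective φ := by
    refine (injective_iff_map_eq_one φ).mpr fun σ hσ => ?_
    have hε0 : ε σ = 0 := Multiplicative.ofAdd.injective (by simpa [hφ] using hσ)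
    have hfix : ∀ i, σ (s i) = s i := by
      intro i
      have h0 : ε σ i = 0 := by rw [hε0]; rfl
      by_contra h
      rw [hε] at h0
      simp only [if_neg h] at h0
      exact one_ne_zero h0
    have hone : ∀ x : M, σ x = x := by
      intro x
      have hx : x ∈ Algebra.adjoin K (Set.range s) := htop ▸ trivial
      induction hx using Algebra.adjoin_induction with
      | mem y hy => obtain ⟨i, rfl⟩ := hy; exact hfix i
      | algebraMap r => exact σ.commutes r
      | add a b ha hb iha ihb => rw [map_add, iha, ihb]
      | mul a b ha hb iha ihb => rw [map_mul, iha, ihb]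
    ext x
    exact hone x
  have hcard : Fintype.card (M ≃ₐ[K] M) = Fintype.card (Multiplicative (ι → ZMod 2)) := by
    rw [← Nat.card_eq_fintype_card, IsGalois.card_aut_eq_finrank, hrank]
    simp [Fintype.card_fun]
  exact ⟨MulEquiv.ofBijective φ ((Fintype.bijective_iff_injective_and_card φ).mpr ⟨hinj, hcard⟩)⟩

open MvPolynomial in
lemma prime_X_sub_X {n : ℕ} {i j : Fin (n + 1)} (hij : i ≠ j) :
    Prime (X i - X j : MvPolynomial (Fin (n + 1)) ℂ) := by
  let e := (renameEquiv ℂ (Equiv.swap i 0)).trans (finSuccEquiv ℂ n)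
  rw [← MulEquiv.prime_iff e.toRingEquiv.toMulEquiv]
  have hj0 : Equiv.swap i 0 j ≠ 0 := by
    intro h
    apply hij
    have : Equiv.swap i 0 j = Equiv.swap i 0 i := by rw [h, Equiv.swap_apply_left]
    exact ((Equiv.swap i 0).injective this).symm
  obtain ⟨j', hj'⟩ : ∃ j', Equiv.swap i 0 j = Fin.succ j' :=
    ⟨(Equiv.swap i 0 j).pred hj0, (Fin.succ_pred _ hj0).symm⟩
  have him : e.toRingEquiv.toMulEquiv (X i - X j)
      = Polynomial.X - Polynomial.C (X j') := by
    show e (X i - X j) = _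
    have h1 : e (X i) = Polynomial.X := by
      simp [e, renameEquiv_apply, rename_X, Equiv.swap_apply_left, finSuccEquiv_X_zero]
    have h2 : e (X j) = Polynomial.C (X j') := by
      simp only [e, AlgEquiv.trans_apply, renameEquiv_apply, rename_X]
      rw [hj', finSuccEquiv_X_succ]
    rw [map_sub, h1, h2]
  rw [him]
  exact Polynomial.prime_X_sub_C _

open MvPolynomial in
lemma not_dvd_X_sub_X {n : ℕ} {i j k l : Fin n} (hij : i < j) (hkl : k < l)
    (hne : (i, j) ≠ (k, l)) :
    ¬ ((X i - X j : MvPolynomial (Fin n) ℂ) ∣ X k - X l) := by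
  intro hdvd
  set φ : MvPolynomial (Fin n) ℂ →ₐ[ℂ] MvPolynomial (Fin n) ℂ :=
    aeval (fun v => if v = i then X j else X v) with hφ
  have h0 : φ (X i - X j) = 0 := by simp [hφ]
  have hd : φ (X k - X l) = 0 := by
    obtain ⟨c, hc⟩ := hdvd
    rw [hc, map_mul, h0, zero_mul]
  have hkl' : k ≠ l := ne_of_lt hkl
  rw [map_sub, hφ, aeval_X, aeval_X] at hd
  by_cases hk : k = i
  · subst hk
    have hlj : l ≠ j := by
      intro h
      exact hne (by rw [h])
    have hli : l ≠ k := ne_of_gt hkl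
    rw [if_pos rfl, if_neg hli] at hd
    exact (sub_ne_zero.mpr fun h => hlj.symm (X_injective h)) hd
  · by_cases hl : l = i
    · subst hl
      have hkj : k ≠ j := ne_of_lt (lt_trans hkl hij)
      rw [if_neg hk, if_pos rfl] at hd
      exact (sub_ne_zero.mpr fun h => hkj (X_injective h)) hd
    · rw [if_neg hk, if_neg hl] at hd
      exact (sub_ne_zero.mpr fun h => hkl' (X_injective h)) hd

open MvPolynomial in
lemma indep_sqrt {n : ℕ}
    (S : Finset {p : Fin (n + 1) × Fin (n + 1) // p.1 < p.2})
    (hS : IsSquare (∏ p ∈ S, algebraMap (MvPolynomial (Fin (n + 1)) ℂ)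
      (FractionRing (MvPolynomial (Fin (n + 1)) ℂ)) (X p.1.1 - X p.1.2))) :
    S = ∅ := by
  set R := MvPolynomial (Fin (n + 1)) ℂ with hR
  set K := FractionRing R with hK
  set f : {p : Fin (n + 1) × Fin (n + 1) // p.1 < p.2} → R :=
    fun p => X p.1.1 - X p.1.2 with hf
  by_contra hne
  obtain ⟨p0, hp0⟩ := Finset.nonempty_iff_ne_empty.mpr hne
  obtain ⟨r, hr⟩ := hS
  obtain ⟨a, b, hbmem, hab⟩ := IsFractionRing.div_surjective (A := R) r
  have hb0 : b ≠ 0 := nonZeroDivisors.ne_zero hbmem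
  have hfp0 : ∀ p, f p ≠ 0 := by
    intro p
    exact sub_ne_zero.mpr fun h => (ne_of_lt p.2) (X_injective h)
  have hB : algebraMap R K b ≠ 0 := fun h => hb0 ((IsFractionRing.injective R K) (by simpa using h))
  have key : (∏ p ∈ S, f p) * (b * b) = a * a := by
    apply IsFractionRing.injective R K
    rw [map_mul, map_mul, map_mul, map_prod, hr, ← hab]
    field_simp
    have hB' : algebraMap R (FractionRing (MvPolynomial (Fin (n + 1)) ℂ)) b ≠ 0 := hB
    rw [div_mul_eq_mul_div, div_eq_iff (pow_ne_zero 2 hB')]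
    ring
  have hπ : Prime (f p0) := prime_X_sub_X (ne_of_lt p0.2)
  have ha0 : a ≠ 0 := by
    intro h
    have hL : (∏ p ∈ S, f p) * (b * b) ≠ 0 :=
      mul_ne_zero (Finset.prod_ne_zero_iff.mpr fun p _ => hfp0 p) (mul_ne_zero hb0 hb0)
    rw [key, h, mul_zero] at hL
    exact hL rfl
  have hμ : emultiplicity (f p0) ((∏ p ∈ S, f p) * (b * b)) = emultiplicity (f p0) (a * a) := by
    rw [key]
  rw [emultiplicity_mul hπ, emultiplicity_mul hπ, emultiplicity_mul hπ,
    Finset.emultiplicity_prod hπ] at hμ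
  have hfa := FiniteMultiplicity.of_prime_left hπ ha0
  have hfb := FiniteMultiplicity.of_prime_left hπ hb0
  have hsum : ∑ p ∈ S, emultiplicity (f p0) (f p) = 1 := by
    rw [Finset.sum_eq_single_of_mem p0 hp0 ?_]
    · exact (FiniteMultiplicity.of_prime_left hπ (hfp0 p0)).emultiplicity_self
    · intro q hq hqne
      refine emultiplicity_eq_zero.mpr ?_
      refine not_dvd_X_sub_X p0.2 q.2 ?_
      intro h
      apply hqne
      apply Subtype.ext
      have h1 := congrArg Prod.fst h
      have h2 := congrArg Prod.snd h
      exact Prod.ext h1.symm h2.symm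
  rw [hsum, hfa.emultiplicity_eq_multiplicity, hfb.emultiplicity_eq_multiplicity] at hμ
  have hnat : 1 + (multiplicity (f p0) b + multiplicity (f p0) b)
      = multiplicity (f p0) a + multiplicity (f p0) a := by exact_mod_cast hμ
  omega


def pairEquivSigma (m : ℕ) : {p : Fin m × Fin m // p.1 < p.2} ≃ Σ j : Fin m, Fin j.val where
  toFun x := ⟨x.1.2, ⟨x.1.1.val, x.2⟩⟩
  invFun y := ⟨(⟨y.2.val, lt_trans y.2.isLt y.1.isLt⟩, y.1), y.2.isLt⟩
  left_inv x := rfl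
  right_inv y := rfl

lemma card_pairs (g : ℕ) :
    Fintype.card {p : Fin (2 * g + 1) × Fin (2 * g + 1) // p.1 < p.2} = 2 * g ^ 2 + g := by
  have h1 : Fintype.card {p : Fin (2 * g + 1) × Fin (2 * g + 1) // p.1 < p.2}
      = ∑ j : Fin (2 * g + 1), j.val := by
    rw [Fintype.card_congr (pairEquivSigma (2 * g + 1)), Fintype.card_sigma]
    simp
  rw [h1, Fin.sum_univ_eq_sum_range (fun k => k) (2 * g + 1)]
  apply Nat.eq_of_mul_eq_mul_right (show 0 < 2 by norm_num)
  rw [Finset.sum_range_id_mul_two]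
  simp
  ring

noncomputable instance ratFunFieldCharZero (m : ℕ) : CharZero (RatFunField m) := by
  haveI : CharZero (MvPolynomial (Fin m) ℂ) :=
    charZero_of_injective_algebraMap (MvPolynomial.C_injective (Fin m) ℂ)
  exact charZero_of_injective_algebraMap
    (IsFractionRing.injective (MvPolynomial (Fin m) ℂ) (RatFunField m))

universe u


theorem main_abstract {K M : Type*} [Field K] [Field M] [Algebra K M] [CharZero K]
    {ι : Type*} [Fintype ι] [DecidableEq ι] {N : ℕ} (hcard : Fintype.card ι = N)
    (d : ι → K) (s : ι → M)
    (hs : ∀ p, s p ^ 2 = algebraMap K M (d p))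
    (hgen : Algebra.adjoin K (Set.range s) = ⊤)
    (hd_ind : ∀ S : Finset ι, IsSquare (∏ p ∈ S, d p) → S = ∅) :
    Module.finrank K M = 2 ^ N ∧
    Nonempty ((M ≃ₐ[K] M) ≃* Multiplicative (Fin N → ZMod 2)) := by
  classical
  set e : ι ≃ Fin N := Fintype.equivFinOfCardEq hcard with hedef
  set F := (⊥ : IntermediateField K M) with hFdef
  set dF : Fin N → F := fun k => algebraMap K F (d (e.symm k)) with hdFdef
  set sF : Fin N → M := fun k => s (e.symm k) with hsFdef
  have h2F : (2 : F) ≠ 0 := two_ne_zero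
  have hsF : ∀ k, sF k ^ 2 = algebraMap F M (dF k) := by
    intro k
    rw [hsFdef, hdFdef]
    simp only []
    rw [hs (e.symm k), IsScalarTower.algebraMap_apply K F M]
  have hrangeF : Set.range sF = Set.range s := by
    rw [hsFdef]
    exact Function.Surjective.range_comp e.symm.surjective s
  have htopF : Algebra.adjoin F (Set.range sF) = ⊤ := by
    rw [hrangeF, eq_top_iff]
    intro z hz0
    clear hz0
    have hz : z ∈ Algebra.adjoin K (Set.range s) := hgen ▸ trivial
    induction hz using Algebra.adjoin_induction with
    | mem y hy => exact Algebra.subset_adjoin hy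
    | algebraMap r =>
        rw [IsScalarTower.algebraMap_apply K F M]
        exact Subalgebra.algebraMap_mem _ _
    | add a b ha hb iha ihb => exact add_mem iha ihb
    | mul a b ha hb iha ihb => exact mul_mem iha ihb
  have hindF : ∀ Sf : Finset (Fin N), IsSquare (∏ k ∈ Sf, dF k) → Sf = ∅ := by
    intro Sf hSf
    have hprod : ∏ k ∈ Sf, dF k = algebraMap K F (∏ k ∈ Sf, d (e.symm k)) :=
      (map_prod _ _ _).symm
    rw [hprod] at hSf
    obtain ⟨c, hc⟩ := hSf
    obtain ⟨z, hz⟩ : ∃ z : K, algebraMap K M z = (c : M) :=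
      IntermediateField.mem_bot.mp c.2
    have hKsq : IsSquare (∏ k ∈ Sf, d (e.symm k)) := by
      refine ⟨z, (algebraMap K M).injective ?_⟩
      have hval := congrArg (algebraMap F M) hc
      rw [← IsScalarTower.algebraMap_apply K F M, map_mul] at hval
      rw [hval, map_mul, hz]
      rfl
    have := hd_ind (Sf.map e.symm.toEmbedding) (by rwa [Finset.prod_map])
    simpa [Finset.map_eq_empty] using this
  obtain ⟨hfdF, hrankF⟩ := multi_quad N F M h2F dF sF hsF htopF hindF
  haveI := hfdF
  haveI : FiniteDimensional K F :=
    FiniteDimensional.of_finrank_eq_succ (n := 0) IntermediateField.finrank_bot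
  haveI : FiniteDimensional K M := FiniteDimensional.trans K F M
  have hrankK : Module.finrank K M = 2 ^ N := by
    rw [← hrankF, hFdef]
    exact IntermediateField.finrank_bot'.symm
  refine ⟨hrankK, ?_⟩
  have hd0 : ∀ p : ι, d p ≠ 0 := by
    intro p h
    have := hd_ind {p} (by rw [Finset.prod_singleton, h]; exact ⟨0, by ring⟩)
    simp at this
  have hrankι : Module.finrank K M = 2 ^ Fintype.card ι := by
    rw [hcard]
    exact hrankK
  obtain ⟨ψ⟩ := gal_iso d s hs hgen hd0 hrankι
  refine ⟨ψ.trans (AddEquiv.toMultiplicative ?_)⟩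
  exact (RingEquiv.piCongrLeft' (fun _ : ι => ZMod 2) e).toAddEquiv


/-- Let `L₁ = ℂ(α₁, …, α_{2g+1})` be a rational function field in `2g+1` independent
indeterminates over `ℂ`.  Any field extension `M/L₁` generated by square roots
`√(αᵢ - αⱼ)` of all the pairwise differences (`1 ≤ i < j ≤ 2g+1`) has degree `2^(2g²+g)`
over `L₁`, and its Galois group `Gal(M/L₁)` is isomorphic to `(ℤ/2ℤ)^(2g²+g)`. -/
theorem adjoin_sqrt_differences_degree_and_galois (g : ℕ) (hg : 1 ≤ g)
    (M : Type*) [Field M] [Algebra (RatFunField (2 * g + 1)) M]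
    (s : {p : Fin (2 * g + 1) × Fin (2 * g + 1) // p.1 < p.2} → M)
    (hs : ∀ p, (s p) ^ 2 = algebraMap (RatFunField (2 * g + 1)) M
      (algebraMap (MvPolynomial (Fin (2 * g + 1)) ℂ) (RatFunField (2 * g + 1))
        (MvPolynomial.X p.1.1 - MvPolynomial.X p.1.2)))
    (hgen : Algebra.adjoin (RatFunField (2 * g + 1)) (Set.range s) = ⊤) :
    Module.finrank (RatFunField (2 * g + 1)) M = 2 ^ (2 * g ^ 2 + g) ∧
    Nonempty ((M ≃ₐ[RatFunField (2 * g + 1)] M) ≃*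
      Multiplicative (Fin (2 * g ^ 2 + g) → ZMod 2)) := by
  classical
  exact main_abstract (card_pairs g)
    (fun p => algebraMap (MvPolynomial (Fin (2 * g + 1)) ℂ) (RatFunField (2 * g + 1))
      (MvPolynomial.X p.1.1 - MvPolynomial.X p.1.2))
    s hs hgen (fun S hS => indep_sqrt (n := 2 * g) S hS)
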